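/- For embedded euclidean JC-algebras (A, M_A), (B, M_B), (C, M_C), the associator isomorphism M_A ⊗ (M_B ⊗ M_C) ≅ (M_A ⊗ M_B) ⊗ M_C carries A ⊙ (B ⊙ C) isomorphically onto (A ⊙ B) ⊙ C, where A ⊙ B denotes the Jordan subalgebra of (M_A ⊗ M_B)_sa generated by A ⊗ B. -/

import Mathlib

open TensorProduct

/-- Membership in the Jordan subalgebra of (the self-adjoint part of) a complex
`*`-algebra generated by a set `S`. -/
inductive JGen {R : Type*} [Ring R] [Algebra ℂ R] (S : Set R) : R → Prop
  | base {a : R} : a ∈ S → JGen S a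
  | zero : JGen S 0
  | add {a b : R} : JGen S a → JGen S b → JGen S (a + b)
  | smul (t : ℝ) {a : R} : JGen S a → JGen S ((t : ℂ) • a)
  | jmul {a b : R} : JGen S a → JGen S b → JGen S ((2 : ℂ)⁻¹ • (a * b + b * a))

section Aux
variable {R S : Type*} [Ring R] [Algebra ℂ R] [Ring S] [Algebra ℂ S]

lemma jgen_bind {T U : Set R} (h : ∀ x ∈ T, JGen U x) {x : R} (hx : JGen T x) : JGen U x := by
  induction hx with
  | base ha => exact h _ ha
  | zero => exact JGen.zero
  | add _ _ iha ihb => exact JGen.add iha ihb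
  | smul t _ ih => exact JGen.smul t ih
  | jmul _ _ iha ihb => exact JGen.jmul iha ihb

lemma jgen_map (f : R ≃ₐ[ℂ] S) {U : Set R} {x : R} (hx : JGen U x) : JGen (f '' U) (f x) := by
  induction hx with
  | base ha => exact JGen.base ⟨_, ha, rfl⟩
  | zero => rw [map_zero]; exact JGen.zero
  | add _ _ iha ihb => rw [map_add]; exact JGen.add iha ihb
  | smul t _ ih => rw [map_smul]; exact JGen.smul t ih
  | jmul _ _ iha ihb => rw [map_smul, map_add, map_mul, map_mul]; exact JGen.jmul iha ihb

lemma jgen_image_eq (f : R ≃ₐ[ℂ] S) (U : Set R) :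
    f '' {x | JGen U x} = {x | JGen (f '' U) x} := by
  ext y; constructor
  · rintro ⟨x, hx, rfl⟩; exact jgen_map f hx
  · intro hy
    refine ⟨f.symm y, ?_, f.apply_symm_apply y⟩
    have := jgen_map f.symm hy
    rw [← Set.image_comp] at this
    simpa using this

-- key tensor computation lemmas
lemma key_left {M N : Type*} [Ring M] [Algebra ℂ M] [Ring N] [Algebra ℂ N]
    (a : M) (y z : N) :
    a ⊗ₜ[ℂ] ((2:ℂ)⁻¹ • (y*z+z*y)) =
      (2:ℂ)⁻¹ • ((a ⊗ₜ[ℂ] y) * ((1:M) ⊗ₜ[ℂ] z) + ((1:M) ⊗ₜ[ℂ] z) * (a ⊗ₜ[ℂ] y)) := by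
  simp [Algebra.TensorProduct.tmul_mul_tmul, tmul_add, TensorProduct.tmul_smul]

lemma key_right {M N : Type*} [Ring M] [Algebra ℂ M] [Ring N] [Algebra ℂ N]
    (c : N) (y z : M) :
    ((2:ℂ)⁻¹ • (y*z+z*y)) ⊗ₜ[ℂ] c =
      (2:ℂ)⁻¹ • ((y ⊗ₜ[ℂ] c) * (z ⊗ₜ[ℂ] (1:N)) + (z ⊗ₜ[ℂ] (1:N)) * (y ⊗ₜ[ℂ] c)) := by
  simp [Algebra.TensorProduct.tmul_mul_tmul, add_tmul, TensorProduct.smul_tmul']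

lemma left_absorb {M N : Type*} [Ring M] [Algebra ℂ M] [Ring N] [Algebra ℂ N]
    (A : Set M) (S : Set N) (h1 : (1:M) ∈ A) :
    {x : M ⊗[ℂ] N | JGen (Set.image2 (fun a y => a ⊗ₜ[ℂ] y) A {y | JGen S y}) x}
      = {x : M ⊗[ℂ] N | JGen (Set.image2 (fun a y => a ⊗ₜ[ℂ] y) A S) x} := by
  have one_tmul : ∀ {y : N}, JGen S y →
      JGen (Set.image2 (fun a y => a ⊗ₜ[ℂ] y) A S) ((1:M) ⊗ₜ[ℂ] y) := by
    intro y hy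
    induction hy with
    | base hs => exact JGen.base ⟨_, h1, _, hs, rfl⟩
    | zero => simp only [tmul_zero]; exact JGen.zero
    | add _ _ iha ihb => simp only [tmul_add]; exact JGen.add iha ihb
    | smul t _ ih => simp only [TensorProduct.tmul_smul]; exact JGen.smul t ih
    | jmul _ _ iha ihb => simp only [key_left]; exact JGen.jmul iha ihb
  ext x; constructor
  · apply jgen_bind
    rintro _ ⟨a, ha, y, hy, rfl⟩
    induction hy with
    | base hs => exact JGen.base ⟨_, ha, _, hs, rfl⟩
    | zero => simp only [tmul_zero]; exact JGen.zero
    | add _ _ iha ihb => simp only [tmul_add]; exact JGen.add iha ihb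
    | smul t _ ih => simp only [TensorProduct.tmul_smul]; exact JGen.smul t ih
    | jmul hy hz iha ihb => simp only [key_left]; exact JGen.jmul iha (one_tmul hz)
  · apply jgen_bind
    rintro _ ⟨a, ha, y, hy, rfl⟩
    exact JGen.base ⟨a, ha, y, JGen.base hy, rfl⟩

lemma right_absorb {M N : Type*} [Ring M] [Algebra ℂ M] [Ring N] [Algebra ℂ N]
    (T : Set M) (C : Set N) (h1 : (1:N) ∈ C) :
    {x : M ⊗[ℂ] N | JGen (Set.image2 (fun y c => y ⊗ₜ[ℂ] c) {y | JGen T y} C) x}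
      = {x : M ⊗[ℂ] N | JGen (Set.image2 (fun y c => y ⊗ₜ[ℂ] c) T C) x} := by
  have tmul_one : ∀ {y : M}, JGen T y →
      JGen (Set.image2 (fun y c => y ⊗ₜ[ℂ] c) T C) (y ⊗ₜ[ℂ] (1:N)) := by
    intro y hy
    induction hy with
    | base hs => exact JGen.base ⟨_, hs, _, h1, rfl⟩
    | zero => simp only [zero_tmul]; exact JGen.zero
    | add _ _ iha ihb => simp only [add_tmul]; exact JGen.add iha ihb
    | smul t _ ih => simp only [← TensorProduct.smul_tmul']; exact JGen.smul t ih
    | jmul _ _ iha ihb => simp only [key_right]; exact JGen.jmul iha ihb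
  ext x; constructor
  · apply jgen_bind
    rintro _ ⟨y, hy, c, hc, rfl⟩
    induction hy with
    | base hs => exact JGen.base ⟨_, hs, _, hc, rfl⟩
    | zero => simp only [zero_tmul]; exact JGen.zero
    | add _ _ iha ihb => simp only [add_tmul]; exact JGen.add iha ihb
    | smul t _ ih => simp only [← TensorProduct.smul_tmul']; exact JGen.smul t ih
    | jmul hy hz iha ihb => simp only [key_right]; exact JGen.jmul iha (tmul_one hz)
  · apply jgen_bind
    rintro _ ⟨y, hy, c, hc, rfl⟩
    exact JGen.base ⟨y, JGen.base hy, c, hc, rfl⟩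

end Aux

theorem canonical_tensor_product_associative'
    {MA MB MC : Type*}
    [Ring MA] [Algebra ℂ MA] [Ring MB] [Algebra ℂ MB] [Ring MC] [Algebra ℂ MC]
    (A : Set MA) (B : Set MB) (C : Set MC)
    (hA : (1:MA) ∈ A) (hC : (1:MC) ∈ C) :
    (Algebra.TensorProduct.assoc ℂ ℂ ℂ MA MB MC).symm ''
        {x : MA ⊗[ℂ] (MB ⊗[ℂ] MC) |
          JGen (Set.image2 (fun a y => a ⊗ₜ[ℂ] y) A
            {y : MB ⊗[ℂ] MC | JGen (Set.image2 (fun b c => b ⊗ₜ[ℂ] c) B C) y}) x}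
      = {x : (MA ⊗[ℂ] MB) ⊗[ℂ] MC |
          JGen (Set.image2 (fun y c => y ⊗ₜ[ℂ] c)
            {y : MA ⊗[ℂ] MB | JGen (Set.image2 (fun a b => a ⊗ₜ[ℂ] b) A B) y} C) x} := by
  have himg : (Algebra.TensorProduct.assoc ℂ ℂ ℂ MA MB MC).symm ''
      Set.image2 (fun a y => a ⊗ₜ[ℂ] y) A (Set.image2 (fun b c => b ⊗ₜ[ℂ] c) B C)
      = Set.image2 (fun y c => y ⊗ₜ[ℂ] c) (Set.image2 (fun a b => a ⊗ₜ[ℂ] b) A B) C := by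
    ext x; constructor
    · rintro ⟨_, ⟨a, ha, _, ⟨b, hb, c, hc, rfl⟩, rfl⟩, rfl⟩
      exact ⟨_, ⟨a, ha, b, hb, rfl⟩, c, hc,
        rfl⟩
    · rintro ⟨_, ⟨a, ha, b, hb, rfl⟩, c, hc, rfl⟩
      exact ⟨a ⊗ₜ (b ⊗ₜ c), ⟨a, ha, _, ⟨b, hb, c, hc, rfl⟩, rfl⟩,
        rfl⟩
  rw [left_absorb A _ hA, right_absorb _ C hC,
    jgen_image_eq (Algebra.TensorProduct.assoc ℂ ℂ ℂ MA MB MC).symm, himg]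

/-- The hypotheses making `(A, M)` an embedded euclidean JC-algebra: `M` a
finite-dimensional complex `*`-algebra, `A` a unital Jordan subalgebra of `M_sa`. -/
def IsEJC {M : Type*} [Ring M] [Algebra ℂ M] [StarRing M] (A : Set M) : Prop :=
  (∀ a ∈ A, star a = a) ∧ (1 : M) ∈ A ∧
  (∀ a ∈ A, ∀ b ∈ A, a + b ∈ A) ∧ (∀ (t : ℝ), ∀ a ∈ A, (t : ℂ) • a ∈ A) ∧
  (∀ a ∈ A, ∀ b ∈ A, (2 : ℂ)⁻¹ • (a * b + b * a) ∈ A)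

/-- The associator isomorphism `M_A ⊗ (M_B ⊗ M_C) ≅ (M_A ⊗ M_B) ⊗ M_C` carries
`A ⊙ (B ⊙ C)` isomorphically onto `(A ⊙ B) ⊙ C`, where `A ⊙ B` is the Jordan subalgebra
of `(M_A ⊗ M_B)_sa` generated by `A ⊗ B`. -/
theorem canonical_tensor_product_associative
    {MA MB MC : Type*}
    [Ring MA] [Algebra ℂ MA] [StarRing MA] [StarModule ℂ MA] [FiniteDimensional ℂ MA]
    [Ring MB] [Algebra ℂ MB] [StarRing MB] [StarModule ℂ MB] [FiniteDimensional ℂ MB]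
    [Ring MC] [Algebra ℂ MC] [StarRing MC] [StarModule ℂ MC] [FiniteDimensional ℂ MC]
    (A : Set MA) (B : Set MB) (C : Set MC)
    (hA : IsEJC A) (hB : IsEJC B) (hC : IsEJC C) :
    (Algebra.TensorProduct.assoc ℂ ℂ ℂ MA MB MC).symm ''
        {x : MA ⊗[ℂ] (MB ⊗[ℂ] MC) |
          JGen (Set.image2 (fun a y => a ⊗ₜ[ℂ] y) A
            {y : MB ⊗[ℂ] MC | JGen (Set.image2 (fun b c => b ⊗ₜ[ℂ] c) B C) y}) x}
      = {x : (MA ⊗[ℂ] MB) ⊗[ℂ] MC |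
          JGen (Set.image2 (fun y c => y ⊗ₜ[ℂ] c)
            {y : MA ⊗[ℂ] MB | JGen (Set.image2 (fun a b => a ⊗ₜ[ℂ] b) A B) y} C) x} := by
  exact canonical_tensor_product_associative' A B C hA.2.1 hC.2.1
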